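/- Let G = (X, Y, E) be a weighted bipartite graph and H ⊆ X with |H| = h. Let E' be the edges of G − H and Y' the endpoints in Y of edges in E'. For each x_i ∈ H, let E_i be the union of { (x_i, y) : y ∈ Y' } and the h heaviest edges (x_i, y) with y ∉ Y'. Then E' ∪ E₁ ∪ ⋯ ∪ E_h contains a maximum weight matching of G, and |E' ∪ E₁ ∪ ⋯ ∪ E_h| = O(h·|E'| + h²). -/

import Mathlib

open Finset

/-- A matching: a set of pairwise non-adjacent edges. -/
def IsMatching {X Y : Type*} (M : Finset (X × Y)) : Prop :=
  ∀ e ∈ M, ∀ f ∈ M, e ≠ f → e.1 ≠ f.1 ∧ e.2 ≠ f.2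

/-- Let `G = (X,Y,E)` be a weighted bipartite graph and `H ⊆ X` with `|H| = h`.
Let `E'` be the edges of `G − H` and `Y'` the `Y`-endpoints of edges in `E'`.
For each `x ∈ H`, let `S x` consist of all edges `(x,y)` with `y ∈ Y'` together with the
`h` heaviest edges `(x,y)` with `y ∉ Y'`.  Then `E' ∪ ⋃_{x ∈ H} S x` contains a maximum
weight matching of `G`, and it has at most `(h+1)·|E'| + h²` edges, i.e. `O(h|E'| + h²)`. -/
theorem sparsification_removing_dominating_nodes
    {X Y : Type*} [Fintype X] [Fintype Y] [DecidableEq X] [DecidableEq Y]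
    (E : Finset (X × Y)) (w : X × Y → ℝ) (hw : ∀ e ∈ E, 0 < w e)
    (H : Finset X) (h : ℕ) (hh : H.card = h)
    (E' : Finset (X × Y)) (hE' : E' = E.filter (fun e => e.1 ∉ H))
    (Y' : Finset Y) (hY' : Y' = E'.image Prod.snd)
    (S : X → Finset (X × Y))
    (hSsub : ∀ x ∈ H, S x ⊆ E.filter (fun e => e.1 = x))
    (hSY' : ∀ x ∈ H, ∀ e ∈ E, e.1 = x → e.2 ∈ Y' → e ∈ S x)
    (hScard : ∀ x ∈ H, ((S x).filter (fun e => e.2 ∉ Y')).card =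
      min h ((E.filter (fun e => e.1 = x ∧ e.2 ∉ Y')).card)
    )
    (hSheavy : ∀ x ∈ H, ∀ e ∈ (S x).filter (fun e => e.2 ∉ Y'),
      ∀ f ∈ E.filter (fun e => e.1 = x ∧ e.2 ∉ Y'), f ∉ S x → w f ≤ w e) :
    (E' ∪ H.biUnion S).card ≤ (h + 1) * E'.card + h ^ 2 ∧
    ∃ M ⊆ E' ∪ H.biUnion S, IsMatching M ∧
      ∀ M' ⊆ E, IsMatching M' → ∑ e ∈ M', w e ≤ ∑ e ∈ M, w e := by
  classical
  have hE'sub : E' ⊆ E := by rw [hE']; exact Finset.filter_subset _ _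
  have hE'mem : ∀ e : X × Y, e ∈ E' ↔ e ∈ E ∧ e.1 ∉ H := by
    intro e; rw [hE']; simp
  have hY'of : ∀ e ∈ E, e.1 ∉ H → e.2 ∈ Y' := by
    intro e he hnH
    rw [hY']
    exact Finset.mem_image_of_mem _ ((hE'mem e).2 ⟨he, hnH⟩)
  have hSE : ∀ x ∈ H, S x ⊆ E := fun x hx =>
    (hSsub x hx).trans (Finset.filter_subset _ _)
  have hSfst : ∀ x ∈ H, ∀ e ∈ S x, e.1 = x := by
    intro x hx e he
    have := hSsub x hx he
    simp only [Finset.mem_filter] at this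
    exact this.2
  have hTE : E' ∪ H.biUnion S ⊆ E := by
    intro e he
    rcases Finset.mem_union.1 he with h1 | h1
    · exact hE'sub h1
    · rcases Finset.mem_biUnion.1 h1 with ⟨x, hx, hex⟩
      exact hSE x hx hex
  constructor
  · -- cardinality bound
    have hY'card : Y'.card ≤ E'.card := by
      rw [hY']; exact Finset.card_image_le
    have hcardS : ∀ x ∈ H, (S x).card ≤ E'.card + h := by
      intro x hx
      have hsplit : ((S x).filter (fun e => e.2 ∈ Y')).card
          + ((S x).filter (fun e => e.2 ∉ Y')).card = (S x).card :=
        Finset.card_filter_add_card_filter_not (p := fun e : X × Y => e.2 ∈ Y')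
      have h1 : ((S x).filter (fun e => e.2 ∈ Y')).card ≤ Y'.card := by
        apply Finset.card_le_card_of_injOn (fun e => e.2)
        · intro e he
          exact (Finset.mem_filter.1 he).2
        · intro a ha b hb hab
          have ha' := Finset.mem_filter.1 ha
          have hb' := Finset.mem_filter.1 hb
          have h1 := hSfst x hx a ha'.1
          have h2 := hSfst x hx b hb'.1
          exact Prod.ext (h1.trans h2.symm) hab
      have h2 : ((S x).filter (fun e => e.2 ∉ Y')).card ≤ h := by
        rw [hScard x hx]; exact min_le_left _ _
      omega
    have hbi : (H.biUnion S).card ≤ ∑ x ∈ H, (S x).card := Finset.card_biUnion_le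
    have hsum : ∑ x ∈ H, (S x).card ≤ ∑ _x ∈ H, (E'.card + h) :=
      Finset.sum_le_sum hcardS
    have hconst : ∑ _x ∈ H, (E'.card + h) = h * (E'.card + h) := by
      rw [Finset.sum_const, hh, smul_eq_mul]
    have hu : (E' ∪ H.biUnion S).card ≤ E'.card + (H.biUnion S).card :=
      Finset.card_union_le _ _
    have : (E' ∪ H.biUnion S).card ≤ E'.card + h * (E'.card + h) := by omega
    nlinarith [this]
  · -- maximum weight matching contained in the sparsifier
    set T := E' ∪ H.biUnion S with hT
    let P : Finset (Finset (X × Y)) := E.powerset.filter (fun M => IsMatching M)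
    have hPmem : ∀ M : Finset (X × Y), M ∈ P ↔ M ⊆ E ∧ IsMatching M := by
      intro M; simp [P, Finset.mem_filter, Finset.mem_powerset]
    have hPne : P.Nonempty := ⟨∅, (hPmem ∅).2 ⟨Finset.empty_subset _, by intro e he; simp at he⟩⟩
    obtain ⟨M0, hM0P, hM0max⟩ := P.exists_max_image (fun M => ∑ e ∈ M, w e) hPne
    set W : ℝ := ∑ e ∈ M0, w e with hW
    let Q : Finset (Finset (X × Y)) := P.filter (fun M => ∑ e ∈ M, w e = W)
    have hQne : Q.Nonempty := ⟨M0, by simp [Q, hM0P, hW]⟩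
    obtain ⟨M, hMQ, hMmin⟩ := Q.exists_min_image (fun M => (M \ T).card) hQne
    have hMQ' := Finset.mem_filter.1 hMQ
    have hMP := (hPmem M).1 hMQ'.1
    have hME : M ⊆ E := hMP.1
    have hMmatch : IsMatching M := hMP.2
    have hMW : ∑ e ∈ M, w e = W := hMQ'.2
    -- claim : M \ T = ∅
    have hbad : M \ T = ∅ := by
      by_contra hne
      obtain ⟨e, he⟩ := Finset.nonempty_of_ne_empty hne
      have heM : e ∈ M := (Finset.mem_sdiff.1 he).1
      have heT : e ∉ T := (Finset.mem_sdiff.1 he).2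
      have heE : e ∈ E := hME heM
      have hxH : e.1 ∈ H := by
        by_contra hx
        exact heT (Finset.mem_union_left _ ((hE'mem e).2 ⟨heE, hx⟩))
      have hnotS : e ∉ S e.1 := by
        intro hc
        exact heT (Finset.mem_union_right _ (Finset.mem_biUnion.2 ⟨e.1, hxH, hc⟩))
      have hynY' : e.2 ∉ Y' := by
        intro hy
        exact hnotS (hSY' e.1 hxH e heE rfl hy)
      set C := E.filter (fun f => f.1 = e.1 ∧ f.2 ∉ Y') with hC
      set F := (S e.1).filter (fun f => f.2 ∉ Y') with hF
      have hFsubC : F ⊆ C := by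
        intro f hf
        have hf' := Finset.mem_filter.1 hf
        exact Finset.mem_filter.2 ⟨hSE e.1 hxH hf'.1, hSfst e.1 hxH f hf'.1, hf'.2⟩
      have heC : e ∈ C := Finset.mem_filter.2 ⟨heE, rfl, hynY'⟩
      have henF : e ∉ F := fun hc => hnotS (Finset.mem_filter.1 hc).1
      have hFlt : F.card < C.card :=
        Finset.card_lt_card (Finset.ssubset_iff_of_subset hFsubC |>.2 ⟨e, heC, henF⟩)
      have hFcard : F.card = h := by
        have := hScard e.1 hxH
        rw [← hF, ← hC] at this
        omega
      -- bad-Y edges of M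
      set B := M.filter (fun f => f.2 ∉ Y') with hB
      have hBcard : B.card ≤ h := by
        rw [← hh]
        apply Finset.card_le_card_of_injOn (fun f => f.1)
        · intro f hf
          have hf' := Finset.mem_filter.1 hf
          by_contra hfH
          exact hf'.2 (hY'of f (hME hf'.1) hfH)
        · intro a ha b hb hab
          by_contra hne'
          exact (hMmatch a (Finset.mem_filter.1 ha).1 b (Finset.mem_filter.1 hb).1 hne').1 hab
      have heB : e ∈ B := Finset.mem_filter.2 ⟨heM, hynY'⟩
      -- find replacement edge f'
      have hFinj : Set.InjOn (fun f : X × Y => f.2) F := by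
        intro a ha b hb hab
        have h1 := hSfst e.1 hxH a (Finset.mem_filter.1 ha).1
        have h2 := hSfst e.1 hxH b (Finset.mem_filter.1 hb).1
        exact Prod.ext (h1.trans h2.symm) hab
      have hFimg : (F.image (fun f => f.2)).card = h := by
        rw [Finset.card_image_of_injOn hFinj, hFcard]
      obtain ⟨f', hf'F, hf'new⟩ :
          ∃ f' ∈ F, f'.2 ∉ (B.erase e).image (fun f => f.2) := by
        by_contra hall
        push_neg at hall
        have hsub : F.image (fun f => f.2) ⊆ (B.erase e).image (fun f => f.2) := by
          intro y hy
          obtain ⟨f, hf, rfl⟩ := Finset.mem_image.1 hy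
          exact hall f hf
        have h1 := Finset.card_le_card hsub
        have h2 : ((B.erase e).image (fun f => f.2)).card ≤ B.card - 1 := by
          calc ((B.erase e).image (fun f => f.2)).card ≤ (B.erase e).card :=
            Finset.card_image_le
          _ = B.card - 1 := Finset.card_erase_of_mem heB
        have hB1 : 1 ≤ B.card := Finset.card_pos.2 ⟨e, heB⟩
        omega
      have hf'S : f' ∈ S e.1 := (Finset.mem_filter.1 hf'F).1
      have hf'nY' : f'.2 ∉ Y' := (Finset.mem_filter.1 hf'F).2
      have hf'fst : f'.1 = e.1 := hSfst e.1 hxH f' hf'S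
      have hf'E : f' ∈ E := hSE e.1 hxH hf'S
      have hf'ne : f' ≠ e := fun hc => hnotS (hc ▸ hf'S)
      -- no edge of M other than e shares the second coordinate with f'
      have hkey : ∀ m ∈ M, m ≠ e → m.2 ≠ f'.2 := by
        intro m hm hme hc
        apply hf'new
        have hmB : m ∈ B := Finset.mem_filter.2 ⟨hm, by rw [hc]; exact hf'nY'⟩
        exact Finset.mem_image.2 ⟨m, Finset.mem_erase.2 ⟨hme, hmB⟩, hc⟩
      have hf'nM : f' ∉ M := fun hc => hkey f' hc hf'ne rfl
      have hwef' : w e ≤ w f' := hSheavy e.1 hxH f' hf'F e heC hnotS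
      -- the new matching
      set M'' := insert f' (M.erase e) with hM''
      have hf'nerase : f' ∉ M.erase e := fun hc => hf'nM (Finset.mem_erase.1 hc).2
      have hM''E : M'' ⊆ E := by
        intro a ha
        rcases Finset.mem_insert.1 ha with rfl | ha'
        · exact hf'E
        · exact hME (Finset.mem_erase.1 ha').2
      have hM''match : IsMatching M'' := by
        intro a ha b hb hab
        rcases Finset.mem_insert.1 ha with rfl | ha' <;>
          rcases Finset.mem_insert.1 hb with rfl | hb'
        · exact absurd rfl hab
        · obtain ⟨hbne, hbM⟩ := Finset.mem_erase.1 hb'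
          constructor
          · rw [hf'fst]
            exact fun hc => (hMmatch e heM b hbM (Ne.symm hbne)).1 hc
          · exact fun hc => hkey b hbM hbne hc.symm
        · obtain ⟨hane, haM⟩ := Finset.mem_erase.1 ha'
          constructor
          · rw [hf'fst]
            exact fun hc => (hMmatch e heM a haM (Ne.symm hane)).1 hc.symm
          · exact fun hc => hkey a haM hane hc
        · exact hMmatch a (Finset.mem_erase.1 ha').2 b (Finset.mem_erase.1 hb').2 hab
      have hM''P : M'' ∈ P := (hPmem M'').2 ⟨hM''E, hM''match⟩
      have hsumM'' : ∑ a ∈ M'', w a = w f' + (∑ a ∈ M, w a - w e) := by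
        rw [hM'', Finset.sum_insert hf'nerase]
        congr 1
        have := Finset.sum_erase_add M w heM
        linarith [this]
      have hWge : W ≤ ∑ a ∈ M'', w a := by
        rw [hsumM'', ← hMW]; linarith
      have hWle : ∑ a ∈ M'', w a ≤ W := hM0max M'' hM''P
      have hM''Q : M'' ∈ Q := Finset.mem_filter.2 ⟨hM''P, le_antisymm hWle hWge⟩
      -- fewer bad edges
      have hf'T : f' ∈ T := Finset.mem_union_right _ (Finset.mem_biUnion.2 ⟨e.1, hxH, hf'S⟩)
      have hsub : M'' \ T ⊆ (M \ T).erase e := by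
        intro a ha
        obtain ⟨haM'', haT⟩ := Finset.mem_sdiff.1 ha
        rcases Finset.mem_insert.1 haM'' with rfl | ha'
        · exact absurd hf'T haT
        · obtain ⟨hane, haM⟩ := Finset.mem_erase.1 ha'
          exact Finset.mem_erase.2 ⟨hane, Finset.mem_sdiff.2 ⟨haM, haT⟩⟩
      have hlt : (M'' \ T).card < (M \ T).card := by
        have h1 := Finset.card_le_card hsub
        have h2 : ((M \ T).erase e).card = (M \ T).card - 1 :=
          Finset.card_erase_of_mem he
        have h3 : 1 ≤ (M \ T).card := Finset.card_pos.2 ⟨e, he⟩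
        omega
      exact absurd (hMmin M'' hM''Q) (not_le.2 hlt)
    refine ⟨M, ?_, hMmatch, ?_⟩
    · intro a ha
      by_contra hc
      have : a ∈ M \ T := Finset.mem_sdiff.2 ⟨ha, hc⟩
      rw [hbad] at this
      exact absurd this (Finset.notMem_empty a)
    · intro M' hM'E hM'match
      have := hM0max M' ((hPmem M').2 ⟨hM'E, hM'match⟩)
      rw [hMW]
      exact this
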